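/- The projection of a point v ∈ ℝ^s onto the standard simplex {u : uᵢ ≥ 0, Σuᵢ = 1} is given by uᵢ = max(vᵢ + λ, 0), where λ = (1 − Σ_{k=1}^ρ v_{(k)})/ρ, v_{(1)} ≥ … ≥ v_{(s)} is the decreasing rearrangement of v, and ρ = max{1 ≤ j ≤ s : v_{(j)} + (1 − Σ_{k=1}^j v_{(k)})/j > 0}. -/

import Mathlib

open Finset

/-- Partial sums of the decreasing rearrangement: S(j) = Σ_{k < j} v(σ k). -/
def sortedPartialSum {s : ℕ} (v : Fin s → ℝ) (σ : Equiv.Perm (Fin s))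
    (j : ℕ) : ℝ :=
  ∑ k : Fin s, if (k : ℕ) < j then v (σ k) else 0

lemma sps_succ {s : ℕ} (v : Fin s → ℝ) (σ : Equiv.Perm (Fin s)) (j : Fin s) :
    sortedPartialSum v σ ((j : ℕ) + 1)
      = sortedPartialSum v σ (j : ℕ) + v (σ j) := by
  unfold sortedPartialSum
  have h1 : ∀ k : Fin s, (if (k:ℕ) < (j:ℕ)+1 then v (σ k) else 0)
      = (if (k:ℕ) < (j:ℕ) then v (σ k) else 0) + (if k = j then v (σ k) else 0) := by
    intro k
    by_cases hk : k = j
    · subst hk; simp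
    · have hne : (k:ℕ) ≠ (j:ℕ) := fun h => hk (Fin.ext h)
      by_cases h2 : (k:ℕ) < (j:ℕ)
      · rw [if_pos (by omega), if_pos h2, if_neg hk]; ring
      · rw [if_neg (by omega), if_neg h2, if_neg hk]; ring
  rw [Finset.sum_congr rfl (fun k _ => h1 k), Finset.sum_add_distrib]
  simp

lemma lam_mono {s : ℕ} (v : Fin s → ℝ) (σ : Equiv.Perm (Fin s)) (ρ : Fin s)
    (hmax : ∀ j : Fin s, ρ < j →
      v (σ j) + (1 - sortedPartialSum v σ ((j:ℕ)+1)) / ((j:ℕ)+1) ≤ 0) :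
    ∀ m : ℕ, ∀ j : Fin s, (j:ℕ) = (ρ:ℕ) + m →
      (1 - sortedPartialSum v σ ((ρ:ℕ)+1)) / ((ρ:ℕ)+1)
        ≤ (1 - sortedPartialSum v σ ((j:ℕ)+1)) / ((j:ℕ)+1) := by
  intro m
  induction m with
  | zero =>
    intro j hj
    have : j = ρ := Fin.ext (by omega)
    rw [this]
  | succ m ih =>
    intro j hj
    have hjlt := j.isLt
    have hj' : (j:ℕ) - 1 < s := by omega
    set j' : Fin s := ⟨(j:ℕ) - 1, hj'⟩ with hj'def
    have hj'c : (j':ℕ) = (ρ:ℕ) + m := by simp [hj'def]; omega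
    have ihj := ih j' hj'c
    have hρj : ρ < j := by rw [Fin.lt_def]; omega
    have hm := hmax j hρj
    have hval : (j:ℕ) = (j':ℕ) + 1 := by omega
    have hrec : sortedPartialSum v σ ((j:ℕ)+1)
        = sortedPartialSum v σ ((j':ℕ)+1) + v (σ j) := by
      rw [sps_succ v σ j, hval]
    refine le_trans ihj ?_
    set a : ℝ := 1 - sortedPartialSum v σ ((j':ℕ)+1) with ha
    have hA : 1 - sortedPartialSum v σ ((j:ℕ)+1) = a - v (σ j) := by
      rw [hrec]; ring
    set c : ℝ := ((j':ℕ):ℝ) + 1 with hc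
    have hcpos : (0:ℝ) < c := by positivity
    have hcc : (((j:ℕ):ℝ)+1) = c + 1 := by
      rw [hc, hval]; push_cast; ring
    have hcast : ((((j':ℕ)+1 : ℕ)):ℝ) = c := by push_cast [hc]; ring
    have hcast2 : ((((j:ℕ)+1 : ℕ)):ℝ) = c + 1 := by
      rw [hval]; push_cast [hc]; ring
    rw [hA] at hm ⊢
    rw [hcc] at hm ⊢
    have h1 : (a - v (σ j)) / (c+1) ≤ - v (σ j) := by linarith
    have h2 : a - v (σ j) ≤ - v (σ j) * (c+1) := by
      rw [div_le_iff₀ (by linarith)] at h1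
      linarith
    rw [div_le_div_iff₀ hcpos (by linarith)]
    nlinarith

/-- Correctness of the sorting algorithm for Euclidean projection onto the
standard probability simplex: if σ sorts v into decreasing order, ρ is the
largest index j with v_{(j)} + (1 − Σ_{k≤j} v_{(k)})/j > 0, and
λ = (1 − Σ_{k≤ρ} v_{(k)})/ρ, then u with uᵢ = max(vᵢ + λ, 0) is the Euclidean
projection of v onto the simplex. -/
theorem simplex_projection_formula {s : ℕ} (hs : 0 < s)
    (v : Fin s → ℝ) (σ : Equiv.Perm (Fin s))
    (hσ : ∀ i j : Fin s, i ≤ j → v (σ j) ≤ v (σ i))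
    (ρ : Fin s)
    (hρ : IsGreatest {j : Fin s |
      0 < v (σ j) + (1 - sortedPartialSum v σ ((j : ℕ) + 1)) / ((j : ℕ) + 1)} ρ) :
    let lam : ℝ := (1 - sortedPartialSum v σ ((ρ : ℕ) + 1)) / ((ρ : ℕ) + 1)
    let u : Fin s → ℝ := fun i => max (v i + lam) 0
    (∀ i, 0 ≤ u i) ∧ (∑ i, u i = 1) ∧
      ∀ z : Fin s → ℝ, (∀ i, 0 ≤ z i) → (∑ i, z i = 1) →
        ∑ i, (v i - u i) ^ 2 ≤ ∑ i, (v i - z i) ^ 2 := by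
  intro lam u
  have hu : ∀ i, u i = max (v i + lam) 0 := fun i => rfl
  have hlam : lam = (1 - sortedPartialSum v σ ((ρ : ℕ) + 1)) / ((ρ : ℕ) + 1) := rfl
  have hρ1 : 0 < v (σ ρ) + lam := hρ.1
  have hmax : ∀ j : Fin s, ρ < j →
      v (σ j) + (1 - sortedPartialSum v σ ((j:ℕ)+1)) / ((j:ℕ)+1) ≤ 0 := by
    intro j hj
    by_contra h
    push_neg at h
    exact absurd (hρ.2 h) (not_le.mpr hj)
  have hupos : ∀ k : Fin s, (k:ℕ) ≤ (ρ:ℕ) → u (σ k) = v (σ k) + lam := by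
    intro k hk
    have h1 : v (σ ρ) ≤ v (σ k) := hσ k ρ (by rwa [Fin.le_def])
    rw [hu]
    exact max_eq_left (by linarith)
  have huneg : ∀ k : Fin s, (ρ:ℕ) < (k:ℕ) → u (σ k) = 0 := by
    intro k hk
    have hmono := lam_mono v σ ρ hmax ((k:ℕ) - (ρ:ℕ)) k (by omega)
    have hk2 : ρ < k := by rwa [Fin.lt_def]
    have := hmax k hk2
    rw [hu]
    refine max_eq_right ?_
    rw [hlam]
    linarith
  have hsum : ∑ i, u i = 1 := by
    have h0 : ∑ i, u i = ∑ k, u (σ k) := (Equiv.sum_comp σ u).symm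
    have h1 : ∀ k : Fin s, u (σ k)
        = (if (k:ℕ) < (ρ:ℕ)+1 then v (σ k) else 0)
          + (if (k:ℕ) < (ρ:ℕ)+1 then lam else 0) := by
      intro k
      by_cases hk : (k:ℕ) < (ρ:ℕ)+1
      · rw [if_pos hk, if_pos hk, hupos k (by omega)]
      · rw [if_neg hk, if_neg hk, huneg k (by omega), add_zero]
    rw [h0, Finset.sum_congr rfl (fun k _ => h1 k), Finset.sum_add_distrib]
    have h2 : (∑ k : Fin s, if (k:ℕ) < (ρ:ℕ)+1 then v (σ k) else 0)
        = sortedPartialSum v σ ((ρ:ℕ)+1) := rfl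
    have h3 : (∑ k : Fin s, if (k:ℕ) < (ρ:ℕ)+1 then lam else 0)
        = (((ρ:ℕ):ℝ)+1) * lam := by
      rw [Fin.sum_univ_eq_sum_range (fun k => if k < (ρ:ℕ)+1 then lam else 0) s]
      rw [← Finset.sum_filter]
      have hfil : (Finset.range s).filter (fun k => k < (ρ:ℕ)+1)
          = Finset.range ((ρ:ℕ)+1) := by
        ext a
        simp only [Finset.mem_filter, Finset.mem_range]
        have := ρ.isLt
        omega
      rw [hfil, Finset.sum_const, Finset.card_range, nsmul_eq_mul]
      push_cast; ring
    rw [h2, h3, hlam]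
    have hne : (((ρ:ℕ):ℝ)+1) ≠ 0 := by positivity
    field_simp
    ring
  refine ⟨fun i => by rw [hu]; exact le_max_right _ _, hsum, ?_⟩
  intro z hz hz1
  have hinner : 0 ≤ ∑ i, (v i - u i) * (u i - z i) := by
    have hpt : ∀ i, -lam * (u i - z i) ≤ (v i - u i) * (u i - z i) := by
      intro i
      rw [hu i]
      by_cases h : 0 ≤ v i + lam
      · rw [max_eq_left h]; apply le_of_eq; ring
      · push_neg at h
        rw [max_eq_right (by linarith)]
        have hzi := hz i
        nlinarith
    have h2 : ∑ i, -lam * (u i - z i) ≤ ∑ i, (v i - u i) * (u i - z i) :=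
      Finset.sum_le_sum (fun i _ => hpt i)
    have h3 : ∑ i, -lam * (u i - z i) = -lam * ((∑ i, u i) - ∑ i, z i) := by
      rw [← Finset.mul_sum, Finset.sum_sub_distrib]
    rw [h3, hsum, hz1] at h2
    simpa using h2
  have hexp : ∀ i : Fin s, (v i - z i)^2
      = (v i - u i)^2 + 2*((v i - u i)*(u i - z i)) + (u i - z i)^2 :=
    fun i => by ring
  have hsq : 0 ≤ ∑ i, (u i - z i)^2 := Finset.sum_nonneg fun i _ => sq_nonneg _
  have heq : ∑ i, (v i - z i)^2
      = (∑ i, (v i - u i)^2) + 2*(∑ i, (v i - u i)*(u i - z i)) + ∑ i, (u i - z i)^2 := by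
    rw [Finset.sum_congr rfl (fun i _ => hexp i), Finset.sum_add_distrib,
      Finset.sum_add_distrib, Finset.mul_sum]
  linarith
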